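/- Let p₁ ≡ p₂ ≡ −q ≡ 1 (mod 4) be distinct primes and let ε_{p₁p₂q} = x + y√(p₁p₂q) be the fundamental unit of ℚ(√(p₁p₂q)) (of norm 1, with x, y positive integers). Then: (1) if x + 1 or x − 1 is a square in ℕ, then 2ε_{p₁p₂q} is a square in ℚ(√(p₁p₂q)) but ε_{p₁p₂q} is not a square in ℚ(√p₁, √(p₂q)); (2) if p₁(x + 1) or p₁(x − 1) is a square in ℕ, then 2ε_{p₁p₂q} is a square in the field ℚ(√p₁, √(p₂q)) but ε_{p₁p₂q} is not; (3) if 2p₁(x + 1) or 2p₁(x − 1) is a square in ℕ, then ε_{p₁p₂q} is a square in ℚ(√p₁, √(p₂q)). -/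

import Mathlib

noncomputable section

/-- `(x, y)` is the fundamental (minimal) positive solution of the Pell equation
`X² - d Y² = 1`, i.e. the fundamental unit of `ℚ(√d)` is `x + y√d` and has norm `1`. -/
def IsFundPell (d x y : ℕ) : Prop :=
  0 < x ∧ 0 < y ∧ x ^ 2 = d * y ^ 2 + 1 ∧
    ∀ x' y' : ℕ, 0 < x' → 0 < y' → x' ^ 2 = d * y' ^ 2 + 1 → x ≤ x'

end

noncomputable section

/-- The field `ℚ(√p₁, √(p₂q))` realized inside `ℝ`. -/
def Lfld2 (p₁ p₂ q : ℕ) : IntermediateField ℚ ℝ :=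
  IntermediateField.adjoin ℚ {Real.sqrt p₁, Real.sqrt (p₂ * q)}

private lemma ratsq_ne {n : ℕ} (hn : ¬ IsSquare n) (u : ℚ) : u ^ 2 ≠ (n : ℚ) := by
  intro h
  exact hn (Rat.isSquare_natCast_iff.mp ⟨u, by rw [← h]; ring⟩)

private lemma not_isSquare_of (p m : ℕ) (hp : p.Prime) (hpm : ¬ p ∣ m) : ¬ IsSquare (p * m) := by
  rintro ⟨k, hk⟩
  have h1 : p ∣ k := by
    have : p ∣ k * k := ⟨m, hk.symm⟩
    exact (Nat.Prime.dvd_mul hp).mp this |>.elim id id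
  obtain ⟨k', rfl⟩ := h1
  apply hpm
  have h2 : p * m = p * (p * k' ^ 2) := by rw [hk]; ring
  have h3 : m = p * k' ^ 2 := Nat.eq_of_mul_eq_mul_left hp.pos h2
  exact ⟨k' ^ 2, h3⟩

private lemma lin_indep_sqrt {w : ℝ} {n : ℚ} (hw : w ^ 2 = (n : ℝ)) (hn : ∀ u : ℚ, u ^ 2 ≠ n)
    (a b : ℚ) (h : (a : ℝ) + (b : ℝ) * w = 0) : a = 0 ∧ b = 0 := by
  by_cases hb : b = 0
  · refine ⟨?_, hb⟩
    rw [hb] at h; push_cast at h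
    have : (a : ℝ) = 0 := by linarith
    exact_mod_cast this
  · exfalso
    apply hn (a / b)
    have hb' : (b : ℝ) ≠ 0 := by exact_mod_cast hb
    have ha : (a : ℝ) ^ 2 = (b : ℝ) ^ 2 * (n : ℝ) := by
      linear_combination ((a : ℝ) - (b : ℝ) * w) * h + (b : ℝ) ^ 2 * hw
    have : ((a / b : ℚ) : ℝ) ^ 2 = ((n : ℚ) : ℝ) := by
      push_cast
      field_simp
      linear_combination ha
    exact_mod_cast this

private lemma indep4 {s t : ℝ} {P Q : ℚ}
    (hs : s ^ 2 = (P : ℝ)) (ht : t ^ 2 = (Q : ℝ))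
    (hP : ∀ u : ℚ, u ^ 2 ≠ P) (hQ : ∀ u : ℚ, u ^ 2 ≠ Q) (hPQ : ∀ u : ℚ, u ^ 2 ≠ P * Q)
    (e f g h : ℚ) (H : (e : ℝ) + (f : ℝ) * s + (g : ℝ) * t + (h : ℝ) * (s * t) = 0) :
    e = 0 ∧ f = 0 ∧ g = 0 ∧ h = 0 := by
  have hPne : P ≠ 0 := by intro h0; exact hP 0 (by rw [h0]; ring)
  by_cases hgh : (g : ℝ) + (h : ℝ) * s = 0
  · obtain ⟨hg, hh⟩ := lin_indep_sqrt hs hP g h hgh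
    rw [hg, hh] at H
    push_cast at H
    have H' : (e : ℝ) + (f : ℝ) * s = 0 := by linarith
    obtain ⟨he, hf⟩ := lin_indep_sqrt hs hP e f H'
    exact ⟨he, hf, hg, hh⟩
  · exfalso
    set A : ℚ := P * f * h - e * g with hA
    set B : ℚ := e * h - f * g with hB
    set δ : ℚ := g ^ 2 - P * h ^ 2 with hδ
    have hδne : δ ≠ 0 := by
      intro h0
      by_cases hh : h = 0
      · have hg : g = 0 := by
          have : g ^ 2 = 0 := by rw [hδ] at h0; rw [hh] at h0; linarith [h0]
          exact pow_eq_zero_iff (n := 2) (by norm_num) |>.mp this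
        apply hgh; rw [hg, hh]; push_cast; ring
      · apply hP (g / h)
        have : g ^ 2 = P * h ^ 2 := by rw [hδ] at h0; linarith
        field_simp
        linear_combination this
    have h3 : t * ((g : ℝ) + (h : ℝ) * s) = -((e : ℝ) + (f : ℝ) * s) := by
      linear_combination H
    have h2 : ((A : ℝ) + (B : ℝ) * s) * ((g : ℝ) + (h : ℝ) * s)
        = -(δ : ℝ) * ((e : ℝ) + (f : ℝ) * s) := by
      rw [hA, hB, hδ]
      push_cast
      linear_combination ((e : ℝ) * h - f * g) * (h : ℝ) * hs
    have htδ : t * (δ : ℝ) = (A : ℝ) + (B : ℝ) * s := by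
      apply mul_right_cancel₀ hgh
      linear_combination (δ : ℝ) * h3 - h2
    have h4 : ((A ^ 2 + P * B ^ 2 - Q * δ ^ 2 : ℚ) : ℝ) + ((2 * A * B : ℚ) : ℝ) * s = 0 := by
      push_cast
      linear_combination (-(t * (δ:ℝ) + (A:ℝ) + (B:ℝ) * s)) * htδ + ((δ:ℝ))^2 * ht
        + (-((B:ℝ)^2)) * hs
    obtain ⟨h5, h6⟩ := lin_indep_sqrt hs hP _ _ h4
    have h6' : A * B = 0 := by linarith [h6]
    rcases mul_eq_zero.mp h6' with hA0 | hB0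
    · apply hPQ (P * B / δ)
      have : P * B ^ 2 = Q * δ ^ 2 := by rw [hA0] at h5; linarith
      rw [div_pow, div_eq_iff (pow_ne_zero 2 hδne)]
      linear_combination P * this
    · apply hQ (A / δ)
      have : A ^ 2 = Q * δ ^ 2 := by rw [hB0] at h5; linarith
      field_simp [hδne]
      linear_combination this

private def InSpan (s t : ℝ) (r : ℝ) : Prop :=
  ∃ e f g h : ℚ, r = (e : ℝ) + (f : ℝ) * s + (g : ℝ) * t + (h : ℝ) * (s * t)

private lemma span_mul {s t : ℝ} {P Q : ℚ} (hs : s ^ 2 = (P : ℝ)) (ht : t ^ 2 = (Q : ℝ))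
    {a b : ℝ} (ha : InSpan s t a) (hb : InSpan s t b) : InSpan s t (a * b) := by
  obtain ⟨e, f, g, h, rfl⟩ := ha
  obtain ⟨e', f', g', h', rfl⟩ := hb
  refine ⟨e*e' + P*(f*f') + Q*(g*g') + P*Q*(h*h'),
    e*f' + f*e' + Q*(g*h') + Q*(h*g'),
    e*g' + g*e' + P*(f*h') + P*(h*f'),
    e*h' + h*e' + f*g' + g*f', ?_⟩
  push_cast
  linear_combination ((f:ℝ)*f' + ((f:ℝ)*h' + (h:ℝ)*f')*t + (h:ℝ)*h'*t^2) * hs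
    + ((g:ℝ)*g' + ((g:ℝ)*h' + (h:ℝ)*g')*s + (h:ℝ)*h'*(P:ℝ)) * ht

private lemma mem_span {s t : ℝ} {P Q : ℚ}
    (hs : s ^ 2 = (P : ℝ)) (ht : t ^ 2 = (Q : ℝ))
    (hP : ∀ u : ℚ, u ^ 2 ≠ P) (hQ : ∀ u : ℚ, u ^ 2 ≠ Q) (hPQ : ∀ u : ℚ, u ^ 2 ≠ P * Q)
    {α : ℝ} (hα : α ∈ IntermediateField.adjoin ℚ {s, t}) : InSpan s t α := by
  induction hα using IntermediateField.adjoin_induction with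
  | mem x hx =>
    rcases hx with rfl | rfl
    · exact ⟨0, 1, 0, 0, by push_cast; ring⟩
    · exact ⟨0, 0, 1, 0, by push_cast; ring⟩
  | algebraMap r =>
    exact ⟨r, 0, 0, 0, by rw [eq_ratCast (algebraMap ℚ ℝ) r]; push_cast; ring⟩
  | add a b _ _ iha ihb =>
    obtain ⟨e, f, g, h, rfl⟩ := iha
    obtain ⟨e', f', g', h', rfl⟩ := ihb
    exact ⟨e + e', f + f', g + g', h + h', by push_cast; ring⟩
  | inv r _ ih =>
    obtain ⟨e, f, g, h, rfl⟩ := ih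
    set r₀ : ℝ := (e : ℝ) + (f : ℝ) * s + (g : ℝ) * t + (h : ℝ) * (s * t) with hr₀
    by_cases hz : r₀ = 0
    · exact ⟨0, 0, 0, 0, by rw [hz]; push_cast; simp⟩
    set r₁ : ℝ := (e : ℝ) + ((-f : ℚ) : ℝ) * s + (g : ℝ) * t + ((-h : ℚ) : ℝ) * (s * t) with hr₁
    set r₂ : ℝ := (e : ℝ) + (f : ℝ) * s + ((-g : ℚ) : ℝ) * t + ((-h : ℚ) : ℝ) * (s * t) with hr₂
    set r₃ : ℝ := (e : ℝ) + ((-f : ℚ) : ℝ) * s + ((-g : ℚ) : ℝ) * t + (h : ℝ) * (s * t) with hr₃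
    have hz₁ : r₁ ≠ 0 := by
      intro h0
      obtain ⟨he, hf, hg, hh⟩ := indep4 hs ht hP hQ hPQ _ _ _ _ h0
      apply hz
      rw [hr₀, he, neg_eq_zero.mp hf, hg, neg_eq_zero.mp hh]; push_cast; ring
    have hz₂ : r₂ ≠ 0 := by
      intro h0
      obtain ⟨he, hf, hg, hh⟩ := indep4 hs ht hP hQ hPQ _ _ _ _ h0
      apply hz
      rw [hr₀, he, hf, neg_eq_zero.mp hg, neg_eq_zero.mp hh]; push_cast; ring
    have hz₃ : r₃ ≠ 0 := by
      intro h0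
      obtain ⟨he, hf, hg, hh⟩ := indep4 hs ht hP hQ hPQ _ _ _ _ h0
      apply hz
      rw [hr₀, he, neg_eq_zero.mp hf, neg_eq_zero.mp hg, hh]; push_cast; ring
    set A : ℚ := e^2 + Q*g^2 - P*f^2 - P*Q*h^2 with hA
    set B : ℚ := 2*(e*g - P*f*h) with hB
    set N : ℚ := A^2 - Q*B^2 with hN
    have h1 : r₀ * r₁ = (A : ℝ) + (B : ℝ) * t := by
      rw [hr₀, hr₁, hA, hB]; push_cast
      linear_combination (-(((f:ℝ) + (h:ℝ)*t))^2) * hs + ((g:ℝ)^2 - (P:ℝ)*(h:ℝ)^2) * ht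
    have h2 : r₂ * r₃ = (A : ℝ) - (B : ℝ) * t := by
      rw [hr₂, hr₃, hA, hB]; push_cast
      linear_combination (-(((f:ℝ) - (h:ℝ)*t))^2) * hs + ((g:ℝ)^2 - (P:ℝ)*(h:ℝ)^2) * ht
    have hNr : r₀ * (r₁ * (r₂ * r₃)) = (N : ℝ) := by
      rw [hN]; push_cast
      linear_combination (r₂ * r₃) * h1 + ((A:ℝ) + (B:ℝ)*t) * h2 + (-((B:ℝ)^2)) * ht
    have hNne : (N : ℝ) ≠ 0 := by
      rw [← hNr]
      exact mul_ne_zero hz (mul_ne_zero hz₁ (mul_ne_zero hz₂ hz₃))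
    have hone : r₀ * ((r₁ * (r₂ * r₃)) * ((N : ℝ))⁻¹) = 1 := by
      rw [← mul_assoc, hNr]
      exact mul_inv_cancel₀ hNne
    have hinv : r₀⁻¹ = (r₁ * (r₂ * r₃)) * ((N : ℝ))⁻¹ :=
      inv_eq_of_mul_eq_one_right hone
    rw [hinv]
    have sp₁ : InSpan s t r₁ := ⟨e, -f, g, -h, hr₁⟩
    have sp₂ : InSpan s t r₂ := ⟨e, f, -g, -h, hr₂⟩
    have sp₃ : InSpan s t r₃ := ⟨e, -f, -g, h, hr₃⟩
    have spN : InSpan s t ((N : ℝ))⁻¹ := ⟨N⁻¹, 0, 0, 0, by push_cast; ring⟩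
    exact span_mul hs ht (span_mul hs ht sp₁ (span_mul hs ht sp₂ sp₃)) spN
  | mul a b _ _ iha ihb =>
    exact span_mul hs ht iha ihb


private lemma pos_eq2 {s t : ℝ} {p r x y a : ℝ}
    (hp : p ≠ 0) (ha : a ≠ 0)
    (hs : s ^ 2 = p) (ht : t ^ 2 = r)
    (hsq : a * a = p * (x + 1) ∨ a * a = p * (x - 1))
    (hpell : x ^ 2 = p * r * y ^ 2 + 1) :
    (a / p * s + p * y / a * t) ^ 2 = 2 * (x + y * (s * t)) := by
  rcases hsq with h | h
  · field_simp
    linear_combination (a*a*a*a) * hs + (p^4*y^2) * ht + (p*(a*a) - p*p*x + p*p) * h - p^3 * hpell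
  · field_simp
    linear_combination (a*a*a*a) * hs + (p^4*y^2) * ht + (p*(a*a) - p*p*x - p*p) * h - p^3 * hpell

private lemma pos_eq3 {s t : ℝ} {p r x y a : ℝ}
    (hp : p ≠ 0) (ha : a ≠ 0)
    (hs : s ^ 2 = p) (ht : t ^ 2 = r)
    (hsq : a * a = 2 * p * (x + 1) ∨ a * a = 2 * p * (x - 1))
    (hpell : x ^ 2 = p * r * y ^ 2 + 1) :
    (a / (2 * p) * s + p * y / a * t) ^ 2 = x + y * (s * t) := by
  rcases hsq with h | h
  · field_simp
    linear_combination (a*a*a*a) * hs + (4*p^4*y^2) * ht + (p*(a*a) - 2*p*p*x + 2*p*p) * h - 4*p^3 * hpell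
  · field_simp
    linear_combination (a*a*a*a) * hs + (4*p^4*y^2) * ht + (p*(a*a) - 2*p*p*x - 2*p*p) * h - 4*p^3 * hpell

private lemma neg_eq2 {w : ℝ} {p r x y a : ℝ}
    (hp : p ≠ 0) (ha : a ≠ 0)
    (hw : w ^ 2 = p * r)
    (hsq : a * a = p * (x + 1) ∨ a * a = p * (x - 1))
    (hpell : x ^ 2 = p * r * y ^ 2 + 1) :
    (a + p * y / a * w) ^ 2 = 2 * p * (x + y * w) := by
  rcases hsq with h | h
  · field_simp
    linear_combination (p^2*y^2) * hw + ((a*a) - p*x + p) * h - p^2 * hpell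
  · field_simp
    linear_combination (p^2*y^2) * hw + ((a*a) - p*x - p) * h - p^2 * hpell

set_option maxHeartbeats 3200000 in
theorem statement2 (p₁ p₂ q : ℕ) (hp₁ : p₁.Prime) (hp₂ : p₂.Prime) (hq : q.Prime)
    (hne₁₂ : p₁ ≠ p₂) (hne₁q : p₁ ≠ q) (hne₂q : p₂ ≠ q)
    (h₁ : p₁ % 4 = 1) (h₂ : p₂ % 4 = 1) (h₃ : q % 4 = 3)
    (x y : ℕ) (hxy : IsFundPell (p₁ * p₂ * q) x y) :
    ((IsSquare (x + 1) ∨ IsSquare (x - 1)) →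
      (∃ u v : ℚ, ((u : ℝ) + (v : ℝ) * Real.sqrt (p₁ * p₂ * q)) ^ 2
          = 2 * ((x : ℝ) + (y : ℝ) * Real.sqrt (p₁ * p₂ * q))) ∧
      ¬ ∃ α ∈ Lfld2 p₁ p₂ q,
        α ^ 2 = (x : ℝ) + (y : ℝ) * Real.sqrt (p₁ * p₂ * q)) ∧
    ((IsSquare (p₁ * (x + 1)) ∨ IsSquare (p₁ * (x - 1))) →
      (∃ α ∈ Lfld2 p₁ p₂ q,
        α ^ 2 = 2 * ((x : ℝ) + (y : ℝ) * Real.sqrt (p₁ * p₂ * q))) ∧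
      ¬ ∃ α ∈ Lfld2 p₁ p₂ q,
        α ^ 2 = (x : ℝ) + (y : ℝ) * Real.sqrt (p₁ * p₂ * q)) ∧
    ((IsSquare (2 * p₁ * (x + 1)) ∨ IsSquare (2 * p₁ * (x - 1))) →
      ∃ α ∈ Lfld2 p₁ p₂ q,
        α ^ 2 = (x : ℝ) + (y : ℝ) * Real.sqrt (p₁ * p₂ * q)) := by
  obtain ⟨hx0, hy0, hpell, -⟩ := hxy
  have hp₁2 := hp₁.two_le
  have hp₂2 := hp₂.two_le
  have hq2 := hq.two_le
  set s : ℝ := Real.sqrt (p₁ : ℝ) with hsdef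
  set t : ℝ := Real.sqrt ((p₂ : ℝ) * (q : ℝ)) with htdef
  set D : ℝ := Real.sqrt ((p₁ : ℝ) * (p₂ : ℝ) * (q : ℝ)) with hDdef
  set P : ℚ := (p₁ : ℚ) with hPdef
  set Q : ℚ := (p₂ : ℚ) * (q : ℚ) with hQdef
  have hPne : P ≠ 0 := by rw [hPdef]; positivity
  have hQne : Q ≠ 0 := by rw [hQdef]; positivity
  have hs : s ^ 2 = (P : ℝ) := by
    rw [hsdef, Real.sq_sqrt (by positivity), hPdef]; push_cast; ring
  have ht : t ^ 2 = (Q : ℝ) := by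
    rw [htdef, Real.sq_sqrt (by positivity), hQdef]; push_cast; ring
  have hst : s * t = D := by
    rw [hsdef, htdef, hDdef]
    rw [show ((p₁ : ℝ) * (p₂ : ℝ) * (q : ℝ)) = (p₁ : ℝ) * ((p₂ : ℝ) * (q : ℝ)) by ring]
    rw [Real.sqrt_mul (by positivity : (0:ℝ) ≤ (p₁ : ℝ)) ((p₂ : ℝ) * (q : ℝ))]
  have hD2 : D ^ 2 = ((P * Q : ℚ) : ℝ) := by
    rw [← hst, mul_pow, hs, ht]; push_cast; ring
  -- arithmetic facts
  have hodd₁ : p₁ % 2 = 1 := by omega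
  have hodd₂ : p₂ % 2 = 1 := by omega
  have hoddq : q % 2 = 1 := by omega
  have nd2p₁ : ¬ (2 ∣ p₁) := by omega
  have nd2Q : ¬ (2 ∣ p₂ * q) := by
    intro hd
    rcases (Nat.Prime.dvd_mul Nat.prime_two).mp hd with hd | hd <;> omega
  have nd2PQ : ¬ (2 ∣ p₁ * (p₂ * q)) := by
    intro hd
    rcases (Nat.Prime.dvd_mul Nat.prime_two).mp hd with hd | hd
    · omega
    · exact nd2Q hd
  have ndQ : ¬ (p₂ ∣ q) := fun hd => hne₂q ((Nat.prime_dvd_prime_iff_eq hp₂ hq).mp hd)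
  have ndPQ : ¬ (p₁ ∣ p₂ * q) := by
    intro hd
    rcases (Nat.Prime.dvd_mul hp₁).mp hd with hd | hd
    · exact hne₁₂ ((Nat.prime_dvd_prime_iff_eq hp₁ hp₂).mp hd)
    · exact hne₁q ((Nat.prime_dvd_prime_iff_eq hp₁ hq).mp hd)
  have nsq2 : ¬ IsSquare (2 : ℕ) := Nat.prime_two.not_isSquare
  have nsqP : ¬ IsSquare p₁ := hp₁.not_isSquare
  have nsqQ : ¬ IsSquare (p₂ * q) := not_isSquare_of p₂ q hp₂ ndQ
  have nsqPQ : ¬ IsSquare (p₁ * (p₂ * q)) := not_isSquare_of p₁ (p₂ * q) hp₁ ndPQ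
  have nsq2P : ¬ IsSquare (2 * p₁) := not_isSquare_of 2 p₁ Nat.prime_two nd2p₁
  have nsq2Q : ¬ IsSquare (2 * (p₂ * q)) := not_isSquare_of 2 (p₂ * q) Nat.prime_two nd2Q
  have nsq2PQ : ¬ IsSquare (2 * (p₁ * (p₂ * q))) :=
    not_isSquare_of 2 (p₁ * (p₂ * q)) Nat.prime_two nd2PQ
  have hPrat : ∀ u : ℚ, u ^ 2 ≠ P := by
    intro u hu
    exact ratsq_ne nsqP u (by rw [hu, hPdef])
  have hQrat : ∀ u : ℚ, u ^ 2 ≠ Q := by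
    intro u hu
    exact ratsq_ne nsqQ u (by rw [hu, hQdef]; push_cast; ring)
  have hPQrat : ∀ u : ℚ, u ^ 2 ≠ P * Q := by
    intro u hu
    exact ratsq_ne nsqPQ u (by rw [hu, hPdef, hQdef]; push_cast; ring)
  have h2rat : ∀ u : ℚ, u ^ 2 ≠ 2 := by
    intro u hu
    exact ratsq_ne nsq2 u (by rw [hu]; norm_num)
  have h2Prat : ∀ u : ℚ, u ^ 2 ≠ 2 * P := by
    intro u hu
    exact ratsq_ne nsq2P u (by rw [hu, hPdef]; push_cast; ring)
  have h2Qrat : ∀ u : ℚ, u ^ 2 ≠ 2 * Q := by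
    intro u hu
    exact ratsq_ne nsq2Q u (by rw [hu, hQdef]; push_cast; ring)
  have h2PQrat : ∀ u : ℚ, u ^ 2 ≠ 2 * (P * Q) := by
    intro u hu
    exact ratsq_ne nsq2PQ u (by rw [hu, hPdef, hQdef]; push_cast; ring)
  have I4 := indep4 hs ht hPrat hQrat hPQrat
  have ID : ∀ a b : ℚ, (a : ℝ) + (b : ℝ) * D = 0 → a = 0 ∧ b = 0 :=
    fun a b hab => lin_indep_sqrt hD2 hPQrat a b hab
  have hpellQ : (x : ℚ) ^ 2 = P * Q * (y : ℚ) ^ 2 + 1 := by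
    have h := congrArg (fun n : ℕ => (n : ℚ)) hpell
    push_cast at h
    rw [hPdef, hQdef]
    linear_combination h
  have hD2' : D ^ 2 = (P : ℝ) * (Q : ℝ) := by rw [hD2]; push_cast; ring
  have hD2N : D ^ 2 = (p₁ : ℝ) * (p₂ : ℝ) * (q : ℝ) := by
    rw [hD2, hPdef, hQdef]; push_cast; ring
  have hpellRN : (x : ℝ) ^ 2 = (p₁ : ℝ) * (p₂ : ℝ) * (q : ℝ) * (y : ℝ) ^ 2 + 1 := by
    have h := congrArg (fun n : ℕ => (n : ℝ)) hpell
    push_cast at h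
    linarith
  have hM : 2 * 2 * 2 ≤ p₁ * p₂ * q := Nat.mul_le_mul (Nat.mul_le_mul hp₁2 hp₂2) hq2
  have hy2 : 1 ≤ y ^ 2 := by nlinarith [hy0]
  have h9 : 9 ≤ x ^ 2 := by nlinarith [hM, hy2, hpell]
  have hx2 : 2 ≤ x := by nlinarith [h9]
  have hy1 : 1 ≤ y := hy0
  -- coefficient extraction for expressions in 1, D
  have coeffD : ∀ (u v c : ℚ),
      ((u : ℝ) + (v : ℝ) * D) ^ 2 = (c : ℝ) * ((x : ℝ) + (y : ℝ) * D) →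
      u ^ 2 + (P * Q) * v ^ 2 = c * (x : ℚ) ∧ 2 * (u * v) = c * (y : ℚ) := by
    intro u v c huv
    have key : ((u ^ 2 + (P * Q) * v ^ 2 - c * (x : ℚ) : ℚ) : ℝ)
        + ((2 * (u * v) - c * (y : ℚ) : ℚ) : ℝ) * D = 0 := by
      push_cast
      push_cast at huv
      linear_combination huv - (v : ℝ) ^ 2 * hD2'
    obtain ⟨hA, hB⟩ := ID _ _ key
    exact ⟨by linarith, by linarith⟩
  -- the negative engine
  have NEG : ∀ c : ℚ, (c = 2 ∨ c = 2 * P) →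
      (∃ u v : ℚ, ((u : ℝ) + (v : ℝ) * D) ^ 2 = (c : ℝ) * ((x : ℝ) + (y : ℝ) * D)) →
      ¬ ∃ α ∈ Lfld2 p₁ p₂ q, α ^ 2 = (x : ℝ) + (y : ℝ) * D := by
    rintro c hc ⟨u, v, huv⟩ ⟨α, hαL, hα2⟩
    obtain ⟨hu1, hu2⟩ := coeffD u v c huv
    have hα' : α ∈ IntermediateField.adjoin ℚ {s, t} := hαL
    obtain ⟨e, f, g, h, hrepr⟩ := mem_span hs ht hPrat hQrat hPQrat hα'
    rw [hrepr, ← hst] at hα2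
    have key : ((e ^ 2 + P * f ^ 2 + Q * g ^ 2 + P * Q * h ^ 2 - (x : ℚ) : ℚ) : ℝ)
        + ((2 * (e * f + Q * (g * h)) : ℚ) : ℝ) * s
        + ((2 * (e * g + P * (f * h)) : ℚ) : ℝ) * t
        + ((2 * (e * h) + 2 * (f * g) - (y : ℚ) : ℚ) : ℝ) * (s * t) = 0 := by
      push_cast
      push_cast at hα2
      linear_combination hα2 - ((f : ℝ) ^ 2 + 2 * (f : ℝ) * (h : ℝ) * t
          + (h : ℝ) ^ 2 * t ^ 2) * hs
        - ((g : ℝ) ^ 2 + 2 * (g : ℝ) * (h : ℝ) * s + (h : ℝ) ^ 2 * (P : ℝ)) * ht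
    obtain ⟨hE, hF, hG, hH⟩ := I4 _ _ _ _ key
    -- get a square root of ε or Pε in ℚ(√d)
    obtain ⟨c', hc', u', v', hv1, hv2⟩ : ∃ c' : ℚ, (c' = 1 ∨ c' = P) ∧ ∃ u' v' : ℚ,
        u' ^ 2 + (P * Q) * v' ^ 2 = c' * (x : ℚ) ∧ 2 * (u' * v') = c' * (y : ℚ) := by
      by_cases hf : f = 0 <;> by_cases hg : g = 0
      · subst hf; subst hg
        exact ⟨1, Or.inl rfl, e, h, by linear_combination hE, by linear_combination hH⟩
      · -- f = 0, g ≠ 0 : impossible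
        exfalso
        subst hf
        have hh0 : h = 0 := by
          have : Q * (g * h) = 0 := by linear_combination hF / 2
          have := mul_eq_zero.mp this
          rcases this with h' | h'
          · exact absurd h' hQne
          · rcases mul_eq_zero.mp h' with h'' | h''
            · exact absurd h'' hg
            · exact h''
        have he0 : e = 0 := by
          have : e * g = 0 := by
            subst hh0; linear_combination hG / 2
          rcases mul_eq_zero.mp this with h' | h'
          · exact h'
          · exact absurd h' hg
        have : (y : ℚ) = 0 := by subst hh0; subst he0; linear_combination -hH
        have : y = 0 := by exact_mod_cast this
        omega
      · -- f ≠ 0, g = 0 : impossible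
        exfalso
        subst hg
        have he0 : e = 0 := by
          have : e * f = 0 := by linear_combination hF / 2
          rcases mul_eq_zero.mp this with h' | h'
          · exact h'
          · exact absurd h' hf
        have hh0 : h = 0 := by
          have : P * (f * h) = 0 := by subst he0; linear_combination hG / 2
          rcases mul_eq_zero.mp this with h' | h'
          · exact absurd h' hPne
          · rcases mul_eq_zero.mp h' with h'' | h''
            · exact absurd h'' hf
            · exact h''
        have : (y : ℚ) = 0 := by subst hh0; subst he0; linear_combination -hH
        have : y = 0 := by exact_mod_cast this
        omega
      · -- f ≠ 0, g ≠ 0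
        have hef : e * f + Q * (g * h) = 0 := by linear_combination hF / 2
        have heg : e * g + P * (f * h) = 0 := by linear_combination hG / 2
        have hcan : e ^ 2 * (f * g) = P * Q * h ^ 2 * (f * g) := by
          linear_combination (e * g) * hef - (Q * (g * h)) * heg
        have he2 : e ^ 2 = P * Q * h ^ 2 :=
          mul_right_cancel₀ (mul_ne_zero hf hg) hcan
        have hh0 : h = 0 := by
          by_contra hh
          exact hPQrat (e / h) (by field_simp; linear_combination he2)
        have he0 : e = 0 := by
          have : e ^ 2 = 0 := by rw [hh0] at he2; linarith
          exact pow_eq_zero_iff (n := 2) (by norm_num) |>.mp this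
        refine ⟨P, Or.inr rfl, P * f, g, ?_, ?_⟩
        · subst hh0; subst he0; linear_combination P * hE
        · subst hh0; subst he0; linear_combination P * hH
    -- Brahmagupta composition: (U + V D)² = c c'
    set U : ℚ := u * u' - (P * Q) * (v * v') with hU
    set V : ℚ := v * u' - u * v' with hV
    have hUV : U ^ 2 + (P * Q) * V ^ 2 = c * c' := by
      rw [hU, hV]
      linear_combination (u' ^ 2 + P * Q * v' ^ 2) * hu1 + (c * (x : ℚ)) * hv1
        - P * Q * (2 * (u' * v')) * hu2 - P * Q * (c * (y : ℚ)) * hv2 + (c * c') * hpellQ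
    have hUV0 : U * V = 0 := by
      rw [hU, hV]
      linear_combination ((u' ^ 2 + P * Q * v' ^ 2) / 2) * hu2 + ((c * (y : ℚ)) / 2) * hv1
        - ((u ^ 2 + P * Q * v ^ 2) / 2) * hv2 - ((c' * (y : ℚ)) / 2) * hu1
    have hm1 : ∀ w : ℚ, w ^ 2 ≠ c * c' := by
      intro w hw
      rcases hc with rfl | rfl <;> rcases hc' with rfl | rfl
      · exact h2rat w (by linear_combination hw)
      · exact h2Prat w (by linear_combination hw)
      · exact h2Prat w (by linear_combination hw)
      · exact h2rat (w / P) (by field_simp; linear_combination hw)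
    have hm2 : ∀ w : ℚ, w ^ 2 ≠ (P * Q) * (c * c') := by
      intro w hw
      rcases hc with rfl | rfl <;> rcases hc' with rfl | rfl
      · exact h2PQrat w (by linear_combination hw)
      · exact h2Qrat (w / P) (by field_simp; linear_combination hw)
      · exact h2Qrat (w / P) (by field_simp; linear_combination hw)
      · exact h2PQrat (w / P) (by field_simp; linear_combination hw)
    rcases mul_eq_zero.mp hUV0 with hU0 | hV0
    · exact hm2 ((P * Q) * V) (by rw [hU0] at hUV; linear_combination (P * Q) * hUV)
    · exact hm1 U (by rw [hV0] at hUV; linear_combination hUV)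
  -- membership helpers
  have ratMem : ∀ r : ℚ, (r : ℝ) ∈ Lfld2 p₁ p₂ q := by
    intro r
    have h := (Lfld2 p₁ p₂ q).algebraMap_mem r
    rwa [eq_ratCast (algebraMap ℚ ℝ) r] at h
  have sMem : s ∈ Lfld2 p₁ p₂ q :=
    IntermediateField.subset_adjoin ℚ _ (by left; rfl)
  have tMem : t ∈ Lfld2 p₁ p₂ q :=
    IntermediateField.subset_adjoin ℚ _ (by right; rfl)
  refine ⟨?_, ?_, ?_⟩
  · -- Part 1
    intro hcase
    constructor
    · -- positive part : 2ε is a square in ℚ(√d)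
      rcases hcase with ⟨a, ha⟩ | ⟨a, ha⟩
      · have hane : a ≠ 0 := by rintro rfl; omega
        have haR : (a : ℝ) * (a : ℝ) = (x : ℝ) + 1 := by
          have h := congrArg (fun n : ℕ => (n : ℝ)) ha
          push_cast at h
          linarith
        have haC : (a : ℝ) ≠ 0 := by exact_mod_cast hane
        refine ⟨(a : ℚ), (y : ℚ) / (a : ℚ), ?_⟩
        push_cast
        field_simp
        linear_combination (y:ℝ)^2 * hD2N + ((a:ℝ)*(a:ℝ) - (x:ℝ) + 1) * haR - hpellRN
      · have hane : a ≠ 0 := by rintro rfl; omega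
        have haR : (a : ℝ) * (a : ℝ) = (x : ℝ) - 1 := by
          have h := congrArg (fun n : ℕ => (n : ℝ)) ha
          rw [Nat.cast_sub (by omega)] at h
          push_cast at h
          linarith
        have haC : (a : ℝ) ≠ 0 := by exact_mod_cast hane
        refine ⟨(a : ℚ), (y : ℚ) / (a : ℚ), ?_⟩
        push_cast
        field_simp
        linear_combination (y:ℝ)^2 * hD2N + ((a:ℝ)*(a:ℝ) - (x:ℝ) - 1) * haR - hpellRN
    · -- negative part
      apply NEG 2 (Or.inl rfl)
      rcases hcase with ⟨a, ha⟩ | ⟨a, ha⟩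
      · have hane : a ≠ 0 := by rintro rfl; omega
        have haR : (a : ℝ) * (a : ℝ) = (x : ℝ) + 1 := by
          have h := congrArg (fun n : ℕ => (n : ℝ)) ha
          push_cast at h
          linarith
        have haC : (a : ℝ) ≠ 0 := by exact_mod_cast hane
        refine ⟨(a : ℚ), (y : ℚ) / (a : ℚ), ?_⟩
        push_cast
        field_simp
        linear_combination (y:ℝ)^2 * hD2N + ((a:ℝ)*(a:ℝ) - (x:ℝ) + 1) * haR - hpellRN
      · have hane : a ≠ 0 := by rintro rfl; omega
        have haR : (a : ℝ) * (a : ℝ) = (x : ℝ) - 1 := by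
          have h := congrArg (fun n : ℕ => (n : ℝ)) ha
          rw [Nat.cast_sub (by omega)] at h
          push_cast at h
          linarith
        have haC : (a : ℝ) ≠ 0 := by exact_mod_cast hane
        refine ⟨(a : ℚ), (y : ℚ) / (a : ℚ), ?_⟩
        push_cast
        field_simp
        linear_combination (y:ℝ)^2 * hD2N + ((a:ℝ)*(a:ℝ) - (x:ℝ) - 1) * haR - hpellRN
  · -- Part 2
    intro hcase
    have hext : ∃ a : ℕ, a ≠ 0 ∧ ((a:ℝ) * (a:ℝ) = (p₁:ℝ) * ((x:ℝ) + 1)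
        ∨ (a:ℝ) * (a:ℝ) = (p₁:ℝ) * ((x:ℝ) - 1)) := by
      have hx1 : 1 ≤ x := by omega
      rcases hcase with ⟨a, ha⟩ | ⟨a, ha⟩
      · refine ⟨a, ?_, Or.inl ?_⟩
        · rintro rfl
          simp [Nat.mul_eq_zero] at ha
          omega
        · have h := congrArg (fun n : ℕ => (n : ℝ)) ha
          push_cast at h
          linarith
      · refine ⟨a, ?_, Or.inr ?_⟩
        · rintro rfl
          simp [Nat.mul_eq_zero] at ha
          omega
        · have h := congrArg (fun n : ℕ => (n : ℝ)) ha
          push_cast [Nat.cast_sub hx1] at h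
          linarith
    obtain ⟨a, hane, hsq⟩ := hext
    have haC : (a : ℝ) ≠ 0 := by exact_mod_cast hane
    have hpC : (p₁ : ℝ) ≠ 0 := by positivity
    have hsN : s ^ 2 = (p₁ : ℝ) := by rw [hs, hPdef]; push_cast; ring
    have htN : t ^ 2 = (p₂ : ℝ) * (q : ℝ) := by rw [ht, hQdef]; push_cast; ring
    have hDN : D ^ 2 = (p₁ : ℝ) * ((p₂ : ℝ) * (q : ℝ)) := by rw [hD2N]; ring
    have hpellN : (x : ℝ) ^ 2 = (p₁ : ℝ) * ((p₂ : ℝ) * (q : ℝ)) * (y : ℝ) ^ 2 + 1 := by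
      linear_combination hpellRN
    constructor
    · refine ⟨(a:ℝ)/(p₁:ℝ) * s + (p₁:ℝ)*(y:ℝ)/(a:ℝ) * t, ?_, ?_⟩
      · apply add_mem
        · refine mul_mem ?_ sMem
          have h := ratMem ((a:ℚ)/(p₁:ℚ)); push_cast at h; exact h
        · refine mul_mem ?_ tMem
          have h := ratMem ((p₁:ℚ)*(y:ℚ)/(a:ℚ)); push_cast at h; exact h
      · rw [← hst]
        exact pos_eq2 hpC haC hsN htN hsq hpellN
    · apply NEG (2 * P) (Or.inr rfl)
      refine ⟨(a:ℚ), (p₁:ℚ)*(y:ℚ)/(a:ℚ), ?_⟩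
      have h := neg_eq2 hpC haC hDN hsq hpellN
      simp only [hPdef]
      push_cast
      linear_combination h
  · -- Part 3
    intro hcase
    have hext : ∃ a : ℕ, a ≠ 0 ∧ ((a:ℝ) * (a:ℝ) = 2 * (p₁:ℝ) * ((x:ℝ) + 1)
        ∨ (a:ℝ) * (a:ℝ) = 2 * (p₁:ℝ) * ((x:ℝ) - 1)) := by
      have hx1 : 1 ≤ x := by omega
      rcases hcase with ⟨a, ha⟩ | ⟨a, ha⟩
      · refine ⟨a, ?_, Or.inl ?_⟩
        · rintro rfl
          simp [Nat.mul_eq_zero] at ha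
          omega
        · have h := congrArg (fun n : ℕ => (n : ℝ)) ha
          push_cast at h
          linarith
      · refine ⟨a, ?_, Or.inr ?_⟩
        · rintro rfl
          simp [Nat.mul_eq_zero] at ha
          omega
        · have h := congrArg (fun n : ℕ => (n : ℝ)) ha
          push_cast [Nat.cast_sub hx1] at h
          linarith
    obtain ⟨a, hane, hsq⟩ := hext
    have haC : (a : ℝ) ≠ 0 := by exact_mod_cast hane
    have hpC : (p₁ : ℝ) ≠ 0 := by positivity
    have hsN : s ^ 2 = (p₁ : ℝ) := by rw [hs, hPdef]; push_cast; ring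
    have htN : t ^ 2 = (p₂ : ℝ) * (q : ℝ) := by rw [ht, hQdef]; push_cast; ring
    have hpellN : (x : ℝ) ^ 2 = (p₁ : ℝ) * ((p₂ : ℝ) * (q : ℝ)) * (y : ℝ) ^ 2 + 1 := by
      linear_combination hpellRN
    refine ⟨(a:ℝ)/(2*(p₁:ℝ)) * s + (p₁:ℝ)*(y:ℝ)/(a:ℝ) * t, ?_, ?_⟩
    · apply add_mem
      · refine mul_mem ?_ sMem
        have h := ratMem ((a:ℚ)/(2*(p₁:ℚ))); push_cast at h; exact h
      · refine mul_mem ?_ tMem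
        have h := ratMem ((p₁:ℚ)*(y:ℚ)/(a:ℚ)); push_cast at h; exact h
    · rw [← hst]
      exact pos_eq3 hpC haC hsN htN hsq hpellN

end
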